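/- Let I be an ideal of a commutative ring R with I ⊆ J(R), the Jacobson radical. Then R is locally stable if and only if R/I is locally stable. -/

import Mathlib

/-- A commutative ring has stable range 1. -/
def HasStableRange1 (R : Type*) [CommRing R] : Prop :=
  ∀ a b : R, Ideal.span {a} ⊔ Ideal.span {b} = ⊤ → ∃ y : R, IsUnit (a + b * y)

/-- An element `a` is stable if `R/aR` has stable range 1. -/
def IsStableElem {R : Type*} [CommRing R] (a : R) : Prop :=
  HasStableRange1 (R ⧸ Ideal.span {a})

/-- A commutative ring is locally stable. -/
def LocallyStable (R : Type*) [CommRing R] : Prop :=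
  ∀ a b : R, Ideal.span {a} ⊔ Ideal.span {b} = ⊤ →
    ∃ y : R, HasStableRange1 (R ⧸ Ideal.span {a + b * y})

/-- A clean ring: every element is the sum of an idempotent and a unit. -/
def IsCleanRing (R : Type*) [CommRing R] : Prop :=
  ∀ a : R, ∃ e u : R, IsIdempotentElem e ∧ IsUnit u ∧ a = e + u

/-- A ring has neat range 1. -/
def NeatRange1 (R : Type*) [CommRing R] : Prop :=
  ∀ a b : R, Ideal.span {a} ⊔ Ideal.span {b} = ⊤ →
    ∃ y : R, IsCleanRing (R ⧸ Ideal.span {a + b * y})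

/-- A ring has almost stable range 1: every proper homomorphic image has stable range 1. -/
def AlmostStableRange1 (R : Type*) [CommRing R] : Prop :=
  ∀ I : Ideal R, I ≠ ⊥ → HasStableRange1 (R ⧸ I)

/-- An elementary divisor ring: every rectangular matrix admits diagonal reduction. -/
def ElementaryDivisorRing (R : Type*) [CommRing R] : Prop :=
  ∀ (m n : ℕ) (A : Matrix (Fin m) (Fin n) R),
    ∃ (P : Matrix (Fin m) (Fin m) R) (Q : Matrix (Fin n) (Fin n) R),
      IsUnit P ∧ IsUnit Q ∧
      (∀ (i : Fin m) (j : Fin n), (i : ℕ) ≠ (j : ℕ) → (P * A * Q) i j = 0) ∧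
      (∀ (i i' : Fin m) (j j' : Fin n), (i : ℕ) = (j : ℕ) → (i' : ℕ) = (j' : ℕ) →
        (i' : ℕ) = (i : ℕ) + 1 → (P * A * Q) i j ∣ (P * A * Q) i' j')

/-- A ring is strongly completable. -/
def StronglyCompletable (R : Type*) [CommRing R] : Prop :=
  ∀ (n : ℕ) (hn : 0 < n) (a : Fin n → R) (d : R),
    (⨆ i, Ideal.span {a i}) = Ideal.span {d} →
    ∃ A : Matrix (Fin n) (Fin n) R, (∀ j, A ⟨0, hn⟩ j = a j) ∧ A.det = d

lemma span_pair_top_iff {R : Type*} [CommRing R] (a b : R) :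
    Ideal.span {a} ⊔ Ideal.span {b} = ⊤ ↔ ∃ c d : R, c * a + d * b = 1 := by
  rw [← Ideal.span_union, Set.singleton_union]
  constructor
  · intro h
    have h1 : (1 : R) ∈ Ideal.span ({a, b} : Set R) := by rw [h]; trivial
    exact Ideal.mem_span_pair.mp h1
  · rintro ⟨c, d, h⟩
    rw [Ideal.eq_top_iff_one]
    exact Ideal.mem_span_pair.mpr ⟨c, d, h⟩

lemma sr1_transfer {S T : Type*} [CommRing S] [CommRing T] (f : S →+* T)
    (hsurj : Function.Surjective f)
    (hker : ∀ x ∈ RingHom.ker f, ∀ z : S, IsUnit (x * z + 1)) :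
    HasStableRange1 S ↔ HasStableRange1 T := by
  constructor
  · intro hS a' b' hab
    obtain ⟨a, rfl⟩ := hsurj a'
    obtain ⟨b, rfl⟩ := hsurj b'
    obtain ⟨c', d', h1⟩ := (span_pair_top_iff _ _).mp hab
    obtain ⟨c, rfl⟩ := hsurj c'
    obtain ⟨d, rfl⟩ := hsurj d'
    have hk : c * a + d * b - 1 ∈ RingHom.ker f := by
      simp only [RingHom.mem_ker, map_sub, map_add, map_mul, map_one, h1, sub_self]
    have hu : IsUnit (c * a + d * b) := by
      have := hker _ hk 1
      simpa using this
    obtain ⟨u, hu'⟩ := hu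
    have htop : Ideal.span {a} ⊔ Ideal.span {b} = ⊤ := by
      apply (span_pair_top_iff a b).mpr
      refine ⟨(↑u⁻¹ : S) * c, (↑u⁻¹ : S) * d, ?_⟩
      calc (↑u⁻¹ : S) * c * a + (↑u⁻¹ : S) * d * b
          = (↑u⁻¹ : S) * (c * a + d * b) := by ring
        _ = (↑u⁻¹ : S) * ↑u := by rw [hu']
        _ = 1 := u.inv_mul
    obtain ⟨y, hy⟩ := hS a b htop
    exact ⟨f y, by simpa [map_add, map_mul] using hy.map f⟩
  · intro hT a b hab
    obtain ⟨c, d, h1⟩ := (span_pair_top_iff _ _).mp hab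
    have hab' : Ideal.span {f a} ⊔ Ideal.span {f b} = ⊤ := by
      apply (span_pair_top_iff _ _).mpr
      exact ⟨f c, f d, by rw [← map_mul, ← map_mul, ← map_add, h1, map_one]⟩
    obtain ⟨y', hy'⟩ := hT (f a) (f b) hab'
    obtain ⟨y, rfl⟩ := hsurj y'
    have hu : IsUnit (f (a + b * y)) := by
      simpa [map_add, map_mul] using hy'
    obtain ⟨v, hv⟩ := hu
    obtain ⟨w, hw⟩ := hsurj (↑v⁻¹ : T)
    have hk : (a + b * y) * w - 1 ∈ RingHom.ker f := by
      simp only [RingHom.mem_ker, map_sub, map_mul, map_one, hw, ← hv, v.mul_inv, sub_self]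
    have hu2 : IsUnit ((a + b * y) * w) := by
      have := hker _ hk 1
      simpa using this
    exact ⟨y, isUnit_of_mul_isUnit_left hu2⟩

lemma quot_transfer {R : Type*} [CommRing R] (I : Ideal R)
    (hI : I ≤ Ideal.jacobson (⊥ : Ideal R)) (c : R) :
    HasStableRange1 (R ⧸ Ideal.span {c}) ↔
      HasStableRange1 ((R ⧸ I) ⧸ Ideal.span {Ideal.Quotient.mk I c}) := by
  set π := Ideal.Quotient.mk I with hπdef
  set g : R →+* (R ⧸ I) ⧸ Ideal.span {π c} :=
    (Ideal.Quotient.mk (Ideal.span {π c})).comp π with hgdef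
  have hgc : ∀ x ∈ Ideal.span {c}, g x = 0 := by
    intro x hx
    obtain ⟨r, rfl⟩ := Ideal.mem_span_singleton.mp hx
    have : g c = 0 := by
      simp only [hgdef, RingHom.comp_apply]
      exact Ideal.Quotient.eq_zero_iff_mem.mpr (Ideal.mem_span_singleton_self _)
    rw [map_mul, this, zero_mul]
  set h : R ⧸ Ideal.span {c} →+* (R ⧸ I) ⧸ Ideal.span {π c} :=
    Ideal.Quotient.lift (Ideal.span {c}) g hgc with hhdef
  have hcomm : ∀ x : R, h (Ideal.Quotient.mk (Ideal.span {c}) x) = g x := fun x => rfl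
  have hsurj : Function.Surjective h := by
    intro t
    obtain ⟨s, rfl⟩ := Ideal.Quotient.mk_surjective t
    obtain ⟨x, rfl⟩ := Ideal.Quotient.mk_surjective s
    exact ⟨Ideal.Quotient.mk _ x, rfl⟩
  have hker : ∀ x ∈ RingHom.ker h, ∀ z, IsUnit (x * z + 1) := by
    intro xb hxb zb
    obtain ⟨x, rfl⟩ := Ideal.Quotient.mk_surjective xb
    obtain ⟨z, rfl⟩ := Ideal.Quotient.mk_surjective zb
    have hx0 : g x = 0 := hxb
    have hx1 : π x ∈ Ideal.span {π c} := by
      rw [hgdef] at hx0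
      exact Ideal.Quotient.eq_zero_iff_mem.mp hx0
    obtain ⟨tb, htb⟩ := Ideal.mem_span_singleton.mp hx1
    obtain ⟨t, rfl⟩ := Ideal.Quotient.mk_surjective tb
    have hxct : x - c * t ∈ I := by
      have : π x = π (c * t) := by rw [map_mul]; exact htb
      exact Ideal.Quotient.eq.mp this
    have hunit : IsUnit ((x - c * t) * z + 1) :=
      Ideal.mem_jacobson_bot.mp (hI hxct) z
    have heq : Ideal.Quotient.mk (Ideal.span {c}) (x * z + 1) =
        Ideal.Quotient.mk (Ideal.span {c}) ((x - c * t) * z + 1) := by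
      apply Ideal.Quotient.eq.mpr
      have : x * z + 1 - ((x - c * t) * z + 1) = c * (t * z) := by ring
      rw [this]
      exact Ideal.mem_span_singleton.mpr ⟨t * z, rfl⟩
    have := hunit.map (Ideal.Quotient.mk (Ideal.span {c}))
    rw [← heq] at this
    simpa [map_add, map_mul, map_one] using this
  exact sr1_transfer h hsurj hker

theorem stmt3 (R : Type*) [CommRing R] (I : Ideal R)
    (hI : I ≤ Ideal.jacobson (⊥ : Ideal R)) :
    LocallyStable R ↔ LocallyStable (R ⧸ I) := by
  have hπ : Function.Surjective (Ideal.Quotient.mk I) := Ideal.Quotient.mk_surjective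
  constructor
  · intro hR a' b' hab
    obtain ⟨a, rfl⟩ := hπ a'
    obtain ⟨b, rfl⟩ := hπ b'
    obtain ⟨c', d', h1⟩ := (span_pair_top_iff _ _).mp hab
    obtain ⟨c, rfl⟩ := hπ c'
    obtain ⟨d, rfl⟩ := hπ d'
    have hk : c * a + d * b - 1 ∈ I := by
      rw [← Ideal.Quotient.eq_zero_iff_mem]
      simp only [map_sub, map_add, map_mul, map_one, h1, sub_self]
    have hu : IsUnit (c * a + d * b) := by
      have := Ideal.mem_jacobson_bot.mp (hI hk) 1
      simpa using this
    obtain ⟨u, hu'⟩ := hu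
    have htop : Ideal.span {a} ⊔ Ideal.span {b} = ⊤ := by
      apply (span_pair_top_iff a b).mpr
      refine ⟨(↑u⁻¹ : R) * c, (↑u⁻¹ : R) * d, ?_⟩
      calc (↑u⁻¹ : R) * c * a + (↑u⁻¹ : R) * d * b
          = (↑u⁻¹ : R) * (c * a + d * b) := by ring
        _ = (↑u⁻¹ : R) * ↑u := by rw [hu']
        _ = 1 := u.inv_mul
    obtain ⟨y, hy⟩ := hR a b htop
    refine ⟨Ideal.Quotient.mk I y, ?_⟩
    have := (quot_transfer I hI (a + b * y)).mp hy
    rwa [map_add, map_mul] at this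
  · intro hQ a b hab
    obtain ⟨c, d, h1⟩ := (span_pair_top_iff _ _).mp hab
    have hab' : Ideal.span {Ideal.Quotient.mk I a} ⊔ Ideal.span {Ideal.Quotient.mk I b} = ⊤ := by
      apply (span_pair_top_iff _ _).mpr
      exact ⟨Ideal.Quotient.mk I c, Ideal.Quotient.mk I d,
        by rw [← map_mul, ← map_mul, ← map_add, h1, map_one]⟩
    obtain ⟨y', hy'⟩ := hQ _ _ hab'
    obtain ⟨y, rfl⟩ := hπ y'
    refine ⟨y, (quot_transfer I hI (a + b * y)).mpr ?_⟩
    rwa [map_add, map_mul]
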